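/- Let Q be a monomial prime ideal of K[x_1,...,x_n] generated by at most h variables, let r ≥ 2 be an integer, and let π(Q) denote the product of the variables generating Q. Then Q^{rh - h} ⊆ Q^{[r]} + (π(Q)^{r-1}), where Q^{[r]} is the ideal generated by the r-th powers of the variables generating Q. -/

import Mathlib

open MvPolynomial

lemma stmt7_prod_pow {K : Type*} [Field K] {n : ℕ} (T : Finset (Fin n)) (e : ℕ) :
    (∏ i ∈ T, (X i : MvPolynomial (Fin n) K) ^ e) =
      monomial (∑ i ∈ T, Finsupp.single i e) (1 : K) := by
  induction T using Finset.induction with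
  | empty => simp
  | insert a s hx ih =>
    rw [Finset.prod_insert hx, Finset.sum_insert hx, ih, X_pow_eq_monomial,
      monomial_mul, one_mul]

/-- If `Q` is a monomial prime generated by at most `h` variables, `r ≥ 2`, and `π(Q)`
the product of those variables, then `Q^{rh-h} ⊆ Q^{[r]} + (π(Q)^{r-1})`. -/
theorem stmt7 {K : Type*} [Field K] {n : ℕ}
    (T : Finset (Fin n)) (h r : ℕ) (hT : T.card ≤ h) (hr : 2 ≤ r) :
    (Ideal.span ((fun i => (MvPolynomial.X i : MvPolynomial (Fin n) K)) '' (T : Set (Fin n)))) ^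
        (r * h - h) ≤
      Ideal.span ((fun i => (MvPolynomial.X i : MvPolynomial (Fin n) K) ^ r) '' (T : Set (Fin n))) +
        Ideal.span {(∏ i ∈ T, (MvPolynomial.X i : MvPolynomial (Fin n) K)) ^ (r - 1)} := by
  set S : Set (MvPolynomial (Fin n) K) := (fun i => (X i : MvPolynomial (Fin n) K)) '' T with hS
  have key : ∀ m : ℕ, (Ideal.span S) ^ m ≤
      Ideal.span ((fun f : Fin n →₀ ℕ => (monomial f (1 : K))) ''
        {f | ↑f.support ⊆ (T : Set (Fin n)) ∧ f.sum (fun _ e => e) = m}) := by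
    intro m
    induction m with
    | zero =>
      rw [pow_zero, Ideal.one_eq_top, top_le_iff, Ideal.eq_top_iff_one]
      exact Ideal.subset_span ⟨0, ⟨by simp, by simp⟩, by simp⟩
    | succ m ih =>
      rw [pow_succ]
      calc Ideal.span S ^ m * Ideal.span S
          ≤ Ideal.span ((fun f : Fin n →₀ ℕ => (monomial f (1 : K))) ''
              {f | ↑f.support ⊆ (T : Set (Fin n)) ∧ f.sum (fun _ e => e) = m}) *
            Ideal.span S := Ideal.mul_mono_left ih
        _ ≤ _ := by
            rw [Ideal.span_mul_span', Ideal.span_le]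
            rintro p hp
            rcases Set.mem_mul.mp hp with ⟨a, ha, b, hb, rfl⟩
            rcases ha with ⟨f, ⟨hfs, hfd⟩, rfl⟩
            rcases hb with ⟨i, hi, rfl⟩
            apply Ideal.subset_span
            refine ⟨f + Finsupp.single i 1, ⟨?_, ?_⟩, ?_⟩
            · refine subset_trans (Finset.coe_subset.mpr (Finsupp.support_add)) ?_
              rw [Finset.coe_union]
              refine Set.union_subset hfs ?_
              refine subset_trans (Finset.coe_subset.mpr Finsupp.support_single_subset) ?_
              simpa using hi
            · rw [Finsupp.sum_add_index' (fun _ => rfl) (fun _ _ _ => rfl), hfd,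
                Finsupp.sum_single_index rfl]
            · show monomial (f + Finsupp.single i 1) (1 : K) = monomial f 1 * X i
              rw [← pow_one (X i), X_pow_eq_monomial, monomial_mul, one_mul]
  refine le_trans (key (r * h - h)) ?_
  rw [Ideal.span_le]
  rintro p ⟨f, ⟨hfs, hfd⟩, rfl⟩
  rw [Ideal.add_eq_sup]
  by_cases hbig : ∃ i ∈ T, r ≤ f i
  · rcases hbig with ⟨i, hi, hri⟩
    apply Ideal.mem_sup_left
    have hle : Finsupp.single i r ≤ f := by
      rw [Finsupp.single_le_iff]; exact hri
    have : (monomial f (1 : K)) = monomial (f - Finsupp.single i r) 1 * X i ^ r := by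
      rw [X_pow_eq_monomial, monomial_mul, one_mul, tsub_add_cancel_of_le hle]
    show monomial f (1 : K) ∈ _
    rw [this]
    exact Ideal.mul_mem_left _ _ (Ideal.subset_span ⟨i, by simpa using hi, rfl⟩)
  · push_neg at hbig
    apply Ideal.mem_sup_right
    -- sum over T equals sum over support
    have hsumT : ∑ i ∈ T, f i = r * h - h := by
      rw [← hfd, Finsupp.sum]
      exact (Finset.sum_subset (by exact_mod_cast hfs)
        (fun x _ hx => Finsupp.notMem_support_iff.mp hx)).symm
    have hbound : ∀ i ∈ T, f i ≤ r - 1 := fun i hi => by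
      have := hbig i hi; omega
    have hconst : ∑ i ∈ T, (r - 1) = T.card * (r - 1) := by
      simp [Finset.sum_const, Nat.smul_one_eq_cast, mul_comm]
    have hle2 : ∑ i ∈ T, f i ≤ ∑ i ∈ T, (r - 1) := Finset.sum_le_sum hbound
    have heq : ∑ i ∈ T, f i = ∑ i ∈ T, (r - 1) := by
      have : T.card * (r - 1) ≤ h * (r - 1) := Nat.mul_le_mul_right _ hT
      have hm : r * h - h = h * (r - 1) := by rw [Nat.mul_sub, mul_one, mul_comm]
      omega
    have hall : ∀ i ∈ T, f i = r - 1 :=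
      fun i hi => ((Finset.sum_eq_sum_iff_of_le hbound).mp heq i hi)
    have hf : f = ∑ i ∈ T, Finsupp.single i (r - 1) := by
      ext j
      rw [Finsupp.finset_sum_apply]
      by_cases hj : j ∈ T
      · rw [hall j hj]
        rw [Finset.sum_eq_single_of_mem j hj (fun b _ hb => Finsupp.single_eq_of_ne' hb)]
        simp
      · have h1 : f j = 0 := Finsupp.notMem_support_iff.mp (fun hc => hj (hfs hc))
        rw [h1, Finset.sum_eq_zero]
        intro b hb
        exact Finsupp.single_eq_of_ne' (fun e => hj (e ▸ hb))
    have : (∏ i ∈ T, (X i : MvPolynomial (Fin n) K)) ^ (r - 1) = monomial f (1 : K) := by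
      rw [← Finset.prod_pow, stmt7_prod_pow, hf]
    show monomial f (1 : K) ∈ _
    rw [← this]
    exact Ideal.subset_span rfl
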